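/- For every d ≥ 3, liminf_{n→∞} W_d(n)/n² ≥ (1/2)(1 − 1/a(d)) and liminf_{n→∞} D_d(n)/n² ≥ (1/2)(1 − 1/a(d)). -/

import Mathlib

open Pointwise Filter

noncomputable section

/-- A set in `ℝ^d` is convexly independent if no point of it lies in the
convex hull of the other points. -/
def ConvInd {d : ℕ} (S : Set (Fin d → ℝ)) : Prop :=
  ∀ p ∈ S, p ∉ convexHull ℝ (S \ {p})

/-- `Efun d n` : the maximum, over `n`-point sets `P ⊂ ℝ^d`, of the number of
unordered pairs of distinct points of `P` whose midpoints are pairwise distinct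
and form a convexly independent set.  Unordered pairs are encoded as ordered
pairs with the reversed pair excluded. -/
def Efun (d n : ℕ) : ℕ :=
  sSup {k | ∃ (P : Finset (Fin d → ℝ)) (T : Finset ((Fin d → ℝ) × (Fin d → ℝ))),
    P.card = n ∧
    (∀ e ∈ T, e.1 ∈ P ∧ e.2 ∈ P ∧ e.1 ≠ e.2 ∧ (e.2, e.1) ∉ T) ∧
    Set.InjOn (fun e : (Fin d → ℝ) × (Fin d → ℝ) => midpoint ℝ e.1 e.2) ↑T ∧
    ConvInd ((fun e : (Fin d → ℝ) × (Fin d → ℝ) => midpoint ℝ e.1 e.2) '' ↑T) ∧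
    T.card = k}

/-- `Mfun d m n` : the maximum, over `m`-point sets `P` and `n`-point sets `Q` in `ℝ^d`,
of the size of a convexly independent subset of the Minkowski sum `P + Q`. -/
def Mfun (d m n : ℕ) : ℕ :=
  sSup {k | ∃ P Q S : Finset (Fin d → ℝ),
    P.card = m ∧ Q.card = n ∧
    (S : Set (Fin d → ℝ)) ⊆ (P : Set (Fin d → ℝ)) + (Q : Set (Fin d → ℝ)) ∧
    ConvInd (S : Set (Fin d → ℝ)) ∧ S.card = k}

/-- A norm on `ℝ^d` whose unit ball is strictly convex (the unit sphere contains
no nondegenerate segment, expressed via midpoints of distinct unit vectors). -/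
structure StrictNorm (d : ℕ) where
  toFun : (Fin d → ℝ) → ℝ
  eq_zero_iff : ∀ x, toFun x = 0 ↔ x = 0
  smul_eq : ∀ (a : ℝ) (x : Fin d → ℝ), toFun (a • x) = |a| * toFun x
  add_le : ∀ x y, toFun (x + y) ≤ toFun x + toFun y
  strictly_convex : ∀ x y, toFun x = 1 → toFun y = 1 → x ≠ y →
    toFun ((1 / 2 : ℝ) • (x + y)) < 1

/-- A (not necessarily strictly convex) norm on `ℝ^d`. -/
structure NormOn (d : ℕ) where
  toFun : (Fin d → ℝ) → ℝ
  eq_zero_iff : ∀ x, toFun x = 0 ↔ x = 0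
  smul_eq : ∀ (a : ℝ) (x : Fin d → ℝ), toFun (a • x) = |a| * toFun x
  add_le : ∀ x y, toFun (x + y) ≤ toFun x + toFun y

/-- `Wfun d n` : the maximum, over `n`-point sets `S ⊂ ℝ^d` and strictly convex
norms on `ℝ^d`, of the number of pairwise nonparallel unit-distance pairs in `S`.
(The nonparallelity condition between distinct ordered pairs automatically rules
out listing any unordered pair twice.) -/
def Wfun (d n : ℕ) : ℕ :=
  sSup {k | ∃ (S : Finset (Fin d → ℝ)) (ν : StrictNorm d)
      (T : Finset ((Fin d → ℝ) × (Fin d → ℝ))),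
    S.card = n ∧
    (∀ e ∈ T, e.1 ∈ S ∧ e.2 ∈ S ∧ ν.toFun (e.1 - e.2) = 1) ∧
    (∀ e ∈ T, ∀ f ∈ T, e ≠ f → ∀ c : ℝ, e.1 - e.2 ≠ c • (f.1 - f.2)) ∧
    T.card = k}

/-- `Ufun d n` : the maximum, over `n`-point sets `S ⊂ ℝ^d` and strictly convex
norms on `ℝ^d`, of the number of unordered unit-distance pairs in `S`. -/
def Ufun (d n : ℕ) : ℕ :=
  sSup {k | ∃ (S : Finset (Fin d → ℝ)) (ν : StrictNorm d)
      (T : Finset ((Fin d → ℝ) × (Fin d → ℝ))),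
    S.card = n ∧
    (∀ e ∈ T, e.1 ∈ S ∧ e.2 ∈ S ∧ e.1 ≠ e.2 ∧ ν.toFun (e.1 - e.2) = 1 ∧ (e.2, e.1) ∉ T) ∧
    T.card = k}

/-- `Dfun d n` : the maximum, over `n`-point sets `S ⊂ ℝ^d` and strictly convex
norms on `ℝ^d`, of the number of unordered diameter pairs in `S` (pairs of points
whose distance equals the diameter `D` of `S` in the norm). -/
def Dfun (d n : ℕ) : ℕ :=
  sSup {k | ∃ (S : Finset (Fin d → ℝ)) (ν : StrictNorm d)
      (T : Finset ((Fin d → ℝ) × (Fin d → ℝ))) (D : ℝ),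
    S.card = n ∧
    (∀ p ∈ S, ∀ q ∈ S, ν.toFun (p - q) ≤ D) ∧
    (∃ p ∈ S, ∃ q ∈ S, ν.toFun (p - q) = D) ∧
    (∀ e ∈ T, e.1 ∈ S ∧ e.2 ∈ S ∧ e.1 ≠ e.2 ∧ ν.toFun (e.1 - e.2) = D ∧ (e.2, e.1) ∉ T) ∧
    T.card = k}

/-- A family of sets in `ℝ^d` is strictly antipodal if for each pair of points
`p ∈ A i`, `q ∈ A j` with `i ≠ j` there is a linear functional `φ` with
`φ p < φ r < φ q` for every other point `r` of the union. -/
def StrictlyAntipodal {d : ℕ} {ι : Type*} (A : ι → Set (Fin d → ℝ)) : Prop :=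
  ∀ i j, i ≠ j → ∀ p ∈ A i, ∀ q ∈ A j, ∃ φ : (Fin d → ℝ) →ₗ[ℝ] ℝ,
    ∀ r ∈ ⋃ t, A t, r ≠ p → r ≠ q → φ p < φ r ∧ φ r < φ q

/-- `aconst d` = `a(d)` : the largest `k` such that for every `m` there is a strictly
antipodal family of `k` sets in `ℝ^d`, each of size at least `m`. -/
def aconst (d : ℕ) : ℕ :=
  sSup {k | ∀ m : ℕ, ∃ A : Fin k → Finset (Fin d → ℝ),
    (∀ i, m ≤ (A i).card) ∧ StrictlyAntipodal (fun i => ((A i : Set (Fin d → ℝ))))}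

/-- The set of midpoints between points in different members of a family of finite sets. -/
def midSet {d : ℕ} {ι : Type*} (B : ι → Finset (Fin d → ℝ)) : Set (Fin d → ℝ) :=
  {x | ∃ i j, i ≠ j ∧ ∃ p ∈ B i, ∃ q ∈ B j, x = midpoint ℝ p q}

/-- The set of differences between points in different members of a family of sets. -/
def diffSet {d : ℕ} {ι : Type*} (A : ι → Set (Fin d → ℝ)) : Set (Fin d → ℝ) :=
  {x | ∃ i j, i ≠ j ∧ ∃ p ∈ A i, ∃ q ∈ A j, x = p - q}

namespace AuxWD
variable {d : ℕ}

def sqE {d : ℕ} (x : Fin d → ℝ) : ℝ := ∑ i, (x i)^2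

lemma sqE_nonneg (x : Fin d → ℝ) : 0 ≤ sqE x :=
  Finset.sum_nonneg fun i _ => sq_nonneg _

lemma sqE_neg (x : Fin d → ℝ) : sqE (-x) = sqE x := by
  unfold sqE; simp

def vmap (ε α : ℝ) (ψ : (Fin d → ℝ) →ₗ[ℝ] ℝ) (x : Fin d → ℝ) : EuclideanSpace ℝ (Fin (d+1)) :=
  WithLp.toLp 2 fun i => if h : (i : ℕ) < d then Real.sqrt ε * x ⟨i, h⟩ else Real.sqrt α * ψ x

lemma vmap_add (ε α : ℝ) (ψ : (Fin d → ℝ) →ₗ[ℝ] ℝ) (x y : Fin d → ℝ) :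
    vmap ε α ψ (x + y) = vmap ε α ψ x + vmap ε α ψ y := by
  ext i
  show _ = vmap ε α ψ x i + vmap ε α ψ y i
  unfold vmap; simp only [PiLp.toLp_apply]
  split
  · simp [Pi.add_apply]; ring
  · simp [map_add]; ring

lemma vmap_smul (ε α : ℝ) (ψ : (Fin d → ℝ) →ₗ[ℝ] ℝ) (a : ℝ) (x : Fin d → ℝ) :
    vmap ε α ψ (a • x) = a • vmap ε α ψ x := by
  ext i
  show _ = a • vmap ε α ψ x i
  unfold vmap; simp only [PiLp.toLp_apply]
  split
  · simp [Pi.smul_apply, smul_eq_mul]; ring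
  · simp [map_smul, smul_eq_mul]; ring

def nu (ε α : ℝ) (ψ : (Fin d → ℝ) →ₗ[ℝ] ℝ) (x : Fin d → ℝ) : ℝ := ‖vmap ε α ψ x‖

lemma nu_nonneg (ε α : ℝ) (ψ : (Fin d → ℝ) →ₗ[ℝ] ℝ) (x : Fin d → ℝ) : 0 ≤ nu ε α ψ x :=
  norm_nonneg _

lemma nu_sq (hε : 0 ≤ ε) (hα : 0 ≤ α) (ψ : (Fin d → ℝ) →ₗ[ℝ] ℝ) (x : Fin d → ℝ) :
    (nu ε α ψ x)^2 = ε * sqE x + α * (ψ x)^2 := by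
  unfold nu
  rw [EuclideanSpace.norm_eq, Real.sq_sqrt (Finset.sum_nonneg fun i _ => sq_nonneg _)]
  rw [Fin.sum_univ_castSucc]
  have h1 : ∀ i : Fin d, ‖vmap ε α ψ x i.castSucc‖^2 = ε * (x i)^2 := by
    intro i
    unfold vmap; simp only [PiLp.toLp_apply]
    rw [dif_pos (by simpa using i.isLt)]
    rw [Real.norm_eq_abs, sq_abs, mul_pow, Real.sq_sqrt hε]
    congr 1
  have h2 : ‖vmap ε α ψ x (Fin.last d)‖^2 = α * (ψ x)^2 := by
    unfold vmap; simp only [PiLp.toLp_apply]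
    rw [dif_neg (by simp)]
    rw [Real.norm_eq_abs, sq_abs, mul_pow, Real.sq_sqrt hα]
  rw [Finset.sum_congr rfl fun i _ => h1 i, h2, ← Finset.mul_sum]
  rfl

lemma nu_eq_zero_iff (hε : 0 < ε) (α : ℝ) (ψ : (Fin d → ℝ) →ₗ[ℝ] ℝ) (x : Fin d → ℝ) :
    nu ε α ψ x = 0 ↔ x = 0 := by
  unfold nu
  rw [norm_eq_zero]
  constructor
  · intro h
    funext i
    have := congrArg (fun v => v (Fin.castSucc i)) h
    rw [show (0 : EuclideanSpace ℝ (Fin (d+1))) (Fin.castSucc i) = 0 from rfl] at this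
    unfold vmap at this; simp only [PiLp.toLp_apply] at this
    rw [dif_pos (by simpa using i.isLt)] at this
    have hs : Real.sqrt ε ≠ 0 := by positivity
    have : x ⟨(Fin.castSucc i : Fin (d+1)), by simpa using i.isLt⟩ = 0 := by
      rcases mul_eq_zero.1 this with h' | h'
      · exact absurd h' hs
      · exact h'
    simpa using this
  · intro h
    subst h
    ext i
    show vmap ε α ψ 0 i = 0
    unfold vmap; simp only [PiLp.toLp_apply]
    split <;> simp

lemma nu_add_le (ε α : ℝ) (ψ : (Fin d → ℝ) →ₗ[ℝ] ℝ) (x y : Fin d → ℝ) :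
    nu ε α ψ (x + y) ≤ nu ε α ψ x + nu ε α ψ y := by
  unfold nu; rw [vmap_add]; exact norm_add_le _ _

lemma nu_smul (ε α : ℝ) (ψ : (Fin d → ℝ) →ₗ[ℝ] ℝ) (a : ℝ) (x : Fin d → ℝ) :
    nu ε α ψ (a • x) = |a| * nu ε α ψ x := by
  unfold nu; rw [vmap_smul, norm_smul, Real.norm_eq_abs]

lemma nu_midpoint_lt (hε : 0 < ε) (α : ℝ) (ψ : (Fin d → ℝ) →ₗ[ℝ] ℝ) (x y : Fin d → ℝ)
    (hx : nu ε α ψ x ≤ 1) (hy : nu ε α ψ y ≤ 1) (hxy : x ≠ y) :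
    nu ε α ψ ((1/2 : ℝ) • (x + y)) < 1 := by
  have hv : vmap ε α ψ x ≠ vmap ε α ψ y := by
    intro h
    apply hxy
    funext i
    have := congrArg (fun v => v (Fin.castSucc i)) h
    unfold vmap at this; simp only [PiLp.toLp_apply] at this
    rw [dif_pos (by simpa using i.isLt), dif_pos (by simpa using i.isLt)] at this
    have hs : Real.sqrt ε ≠ 0 := by positivity
    have := mul_left_cancel₀ hs this
    simpa using this
  have hpar := parallelogram_law_with_norm ℝ (vmap ε α ψ x) (vmap ε α ψ y)
  have hd : 0 < ‖vmap ε α ψ x - vmap ε α ψ y‖ := by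
    rw [norm_pos_iff, sub_ne_zero]; exact hv
  have hnx : ‖vmap ε α ψ x‖ ≤ 1 := hx
  have hny : ‖vmap ε α ψ y‖ ≤ 1 := hy
  have hsum : ‖vmap ε α ψ x + vmap ε α ψ y‖ < 2 := by
    nlinarith [norm_nonneg (vmap ε α ψ x + vmap ε α ψ y), norm_nonneg (vmap ε α ψ x),
      norm_nonneg (vmap ε α ψ y)]
  calc nu ε α ψ ((1/2 : ℝ) • (x + y)) = |(1/2 : ℝ)| * nu ε α ψ (x + y) := nu_smul _ _ _ _ _
    _ = (1/2) * ‖vmap ε α ψ x + vmap ε α ψ y‖ := by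
        rw [abs_of_pos (by norm_num : (0:ℝ) < 1/2)]; unfold nu; rw [vmap_add]
    _ < 1 := by linarith

variable {d : ℕ} {ι : Type} 

def mkNorm (T : Finset ι) (hT : T.Nonempty) (E Al : ι → ℝ)
    (Ψ : ι → ((Fin d → ℝ) →ₗ[ℝ] ℝ)) (hE : ∀ e, 0 < E e) (hA : ∀ e, 0 ≤ Al e) :
    StrictNorm d where
  toFun := fun x => T.sup' hT fun e => nu (E e) (Al e) (Ψ e) x
  eq_zero_iff := by
    intro x
    try dsimp only
    constructor
    · intro h
      obtain ⟨e₀, he₀⟩ := hT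
      have h1 : nu (E e₀) (Al e₀) (Ψ e₀) x ≤ 0 := h ▸ Finset.le_sup' (fun e => nu (E e) (Al e) (Ψ e) x) he₀
      have h2 := nu_nonneg (E e₀) (Al e₀) (Ψ e₀) x
      exact (nu_eq_zero_iff (hE e₀) _ _ _).1 (le_antisymm h1 h2)
    · intro h
      subst h
      apply le_antisymm
      · apply Finset.sup'_le
        intro e _
        exact le_of_eq ((nu_eq_zero_iff (hE e) _ _ _).2 rfl)
      · obtain ⟨e₀, he₀⟩ := hT
        calc (0:ℝ) = nu (E e₀) (Al e₀) (Ψ e₀) 0 := ((nu_eq_zero_iff (hE e₀) _ _ _).2 rfl).symm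
          _ ≤ _ := Finset.le_sup' (fun e => nu (E e) (Al e) (Ψ e) 0) he₀
  smul_eq := by
    intro a x
    try dsimp only
    apply le_antisymm
    · apply Finset.sup'_le
      intro e he
      rw [nu_smul]
      exact mul_le_mul_of_nonneg_left (Finset.le_sup' (fun e => nu (E e) (Al e) (Ψ e) x) he) (abs_nonneg a)
    · obtain ⟨e, he, hsup⟩ := Finset.exists_mem_eq_sup' hT (fun e => nu (E e) (Al e) (Ψ e) x)
      rw [hsup, ← nu_smul]
      exact Finset.le_sup' (fun e => nu (E e) (Al e) (Ψ e) (a • x)) he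
  add_le := by
    intro x y
    try dsimp only
    obtain ⟨e, he, hsup⟩ := Finset.exists_mem_eq_sup' hT (fun e => nu (E e) (Al e) (Ψ e) (x + y))
    rw [hsup]
    calc nu (E e) (Al e) (Ψ e) (x + y) ≤ nu (E e) (Al e) (Ψ e) x + nu (E e) (Al e) (Ψ e) y :=
          nu_add_le _ _ _ _ _
      _ ≤ _ := add_le_add (Finset.le_sup' (fun e => nu (E e) (Al e) (Ψ e) x) he) (Finset.le_sup' (fun e => nu (E e) (Al e) (Ψ e) y) he)
  strictly_convex := by
    intro x y hx hy hxy
    try dsimp only at hx hy ⊢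
    obtain ⟨e, he, hsup⟩ := Finset.exists_mem_eq_sup' hT
      (fun e => nu (E e) (Al e) (Ψ e) ((1/2 : ℝ) • (x + y)))
    rw [hsup]
    exact nu_midpoint_lt (hE e) _ _ _ _ (hx ▸ Finset.le_sup' (fun e => nu (E e) (Al e) (Ψ e) x) he) (hy ▸ Finset.le_sup' (fun e => nu (E e) (Al e) (Ψ e) y) he) hxy

lemma mkNorm_toFun (T : Finset ι) (hT : T.Nonempty) (E Al : ι → ℝ)
    (Ψ : ι → ((Fin d → ℝ) →ₗ[ℝ] ℝ)) (hE : ∀ e, 0 < E e) (hA : ∀ e, 0 ≤ Al e) (x : Fin d → ℝ) :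
    (mkNorm T hT E Al Ψ hE hA).toFun x = T.sup' hT fun e => nu (E e) (Al e) (Ψ e) x := rfl

variable {d k : ℕ}

lemma disj_aux (A : Fin k → Finset (Fin d → ℝ))
    (hAanti : StrictlyAntipodal (fun i => ((A i : Set (Fin d → ℝ)))))
    (B : Fin k → Finset (Fin d → ℝ)) (hBsub : ∀ i, B i ⊆ A i)
    (hB2 : ∀ i, 2 ≤ (B i).card) :
    ∀ i j, i ≠ j → ∀ p, p ∈ B i → p ∈ B j → False := by
  intro i j hij p hpi hpj
  obtain ⟨φ, hφ⟩ := hAanti i j hij p (hBsub i hpi) p (hBsub j hpj)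
  obtain ⟨r, hr, hrp⟩ := Finset.exists_mem_ne (by have := hB2 i; omega : 1 < (B i).card) p
  have hrmem : r ∈ ⋃ t, ((A t : Set (Fin d → ℝ))) := Set.mem_iUnion.2 ⟨i, hBsub i hr⟩
  have := hφ r hrmem hrp hrp
  exact absurd (this.1.trans this.2) (lt_irrefl _)

lemma key_functional (A : Fin k → Finset (Fin d → ℝ))
    (hAanti : StrictlyAntipodal (fun i => ((A i : Set (Fin d → ℝ)))))
    (B : Fin k → Finset (Fin d → ℝ)) (hBsub : ∀ i, B i ⊆ A i)
    (hB2 : ∀ i, 2 ≤ (B i).card)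
    (U : Finset (Fin d → ℝ)) (hU : U = Finset.univ.biUnion B)
    {p q : Fin d → ℝ} {i j : Fin k} (hij : i ≠ j) (hp : p ∈ B i) (hq : q ∈ B j) :
    ∃ ψ : (Fin d → ℝ) →ₗ[ℝ] ℝ, 0 < ψ (p - q) ∧
      ∀ x ∈ U, ∀ y ∈ U, ψ (x - y) ≤ ψ (p - q) ∧ (ψ (x - y) = ψ (p - q) → x = p ∧ y = q) := by
  have hdisj := disj_aux A hAanti B hBsub hB2
  obtain ⟨φ, hφ⟩ := hAanti i j hij p (hBsub i hp) q (hBsub j hq)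
  obtain ⟨r, hr, hrp⟩ := Finset.exists_mem_ne (by have := hB2 i; omega : 1 < (B i).card) p
  have hrq : r ≠ q := fun h => hdisj i j hij r hr (h ▸ hq)
  have hrmem : r ∈ ⋃ t, ((A t : Set (Fin d → ℝ))) := Set.mem_iUnion.2 ⟨i, hBsub i hr⟩
  have hφr := hφ r hrmem hrp hrq
  have hUA : ∀ x ∈ U, x ∈ ⋃ t, ((A t : Set (Fin d → ℝ))) := by
    intro x hx
    rw [hU, Finset.mem_biUnion] at hx
    obtain ⟨t, -, hxt⟩ := hx
    exact Set.mem_iUnion.2 ⟨t, hBsub t hxt⟩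
  have claim1 : ∀ x ∈ U, φ p ≤ φ x ∧ (φ x = φ p → x = p) := by
    intro x hx
    by_cases hxp : x = p
    · subst hxp; exact ⟨le_refl _, fun _ => rfl⟩
    by_cases hxq : x = q
    · subst hxq
      have : φ p < φ x := hφr.1.trans hφr.2
      exact ⟨this.le, fun h => absurd h (ne_of_gt this)⟩
    · have := (hφ x (hUA x hx) hxp hxq).1
      exact ⟨this.le, fun h => absurd h (ne_of_gt this)⟩
  have claim2 : ∀ y ∈ U, φ y ≤ φ q ∧ (φ y = φ q → y = q) := by
    intro y hy
    by_cases hyq : y = q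
    · subst hyq; exact ⟨le_refl _, fun _ => rfl⟩
    by_cases hyp : y = p
    · subst hyp
      have : φ y < φ q := hφr.1.trans hφr.2
      exact ⟨this.le, fun h => absurd h (ne_of_lt this)⟩
    · have := (hφ y (hUA y hy) hyp hyq).2
      exact ⟨this.le, fun h => absurd h (ne_of_lt this)⟩
  refine ⟨-φ, ?_, ?_⟩
  · have : φ p < φ q := hφr.1.trans hφr.2
    simp only [LinearMap.neg_apply, map_sub]
    linarith
  · intro x hx y hy
    have h1 := claim1 x hx
    have h2 := claim2 y hy
    simp only [LinearMap.neg_apply, map_sub]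
    constructor
    · linarith [h1.1, h2.1]
    · intro h
      have hx' : φ x = φ p := by linarith [h1.1, h2.1]
      have hy' : φ y = φ q := by linarith [h1.1, h2.1]
      exact ⟨h1.2 hx', h2.2 hy'⟩


set_option maxHeartbeats 1000000 in
lemma construction {d k n : ℕ} (hk : 2 ≤ k) (hn : 2 * k ≤ n)
    (A : Fin k → Finset (Fin d → ℝ)) (hAcard : ∀ i, n ≤ (A i).card)
    (hAanti : StrictlyAntipodal (fun i => ((A i : Set (Fin d → ℝ))))) :
    ∃ (S : Finset (Fin d → ℝ)) (ν : StrictNorm d)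
      (T : Finset ((Fin d → ℝ) × (Fin d → ℝ))),
      S.card = n ∧
      (∀ e ∈ T, e.1 ∈ S ∧ e.2 ∈ S ∧ e.1 ≠ e.2 ∧ ν.toFun (e.1 - e.2) = 1 ∧ (e.2, e.1) ∉ T) ∧
      (∀ e ∈ T, ∀ f ∈ T, e ≠ f → ∀ c : ℝ, e.1 - e.2 ≠ c • (f.1 - f.2)) ∧
      (∀ p ∈ S, ∀ q ∈ S, ν.toFun (p - q) ≤ 1) ∧
      T.Nonempty ∧
      (k * k - k) * ((n / k) * (n / k)) ≤ 2 * T.card := by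
  have hk0 : 0 < k := by omega
  set m := n / k with hm
  set s := n % k with hs
  have hnm : k * m + s = n := Nat.div_add_mod n k
  have hm2 : 2 ≤ m := (Nat.le_div_iff_mul_le hk0).2 (by omega)
  have hmkm : m ≤ k * m := Nat.le_mul_of_pos_left m hk0
  have hBex : ∀ i : Fin k, ∃ t ⊆ A i, t.card = (if i = (⟨0, hk0⟩ : Fin k) then m + s else m) := by
    intro i
    apply Finset.exists_subset_card_eq
    refine le_trans ?_ (hAcard i)
    split <;> omega
  choose B hBsub hBcard using hBex
  have hB2 : ∀ i, 2 ≤ (B i).card := by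
    intro i; rw [hBcard]; split <;> omega
  have hBm : ∀ i, m ≤ (B i).card := by
    intro i; rw [hBcard]; split <;> omega
  have hdisj := disj_aux A hAanti B hBsub hB2
  set U : Finset (Fin d → ℝ) := Finset.univ.biUnion B with hU
  have hUmem : ∀ i : Fin k, ∀ x ∈ B i, x ∈ U := fun i x hx =>
    Finset.mem_biUnion.2 ⟨i, Finset.mem_univ i, hx⟩
  have hUcard : U.card = n := by
    rw [hU, Finset.card_biUnion (fun i _ j _ hij => Finset.disjoint_left.2
      (fun {p} hpi hpj => hdisj i j hij p hpi hpj))]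
    calc ∑ i, (B i).card = ∑ i : Fin k, (m + if i = (⟨0, hk0⟩ : Fin k) then s else 0) := by
          refine Finset.sum_congr rfl fun i _ => ?_
          rw [hBcard]
          by_cases h : i = (⟨0, hk0⟩ : Fin k) <;> simp [h]
      _ = k * m + s := by
          rw [Finset.sum_add_distrib, Finset.sum_const,
            Finset.sum_ite_eq' Finset.univ (⟨0, hk0⟩ : Fin k) (fun _ => s)]
          simp [Finset.card_univ, mul_comm]
      _ = n := hnm
  set F : Finset (Fin k × Fin k) :=
    Finset.filter (fun ij : Fin k × Fin k => ij.1 < ij.2) Finset.univ with hF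
  set T : Finset ((Fin d → ℝ) × (Fin d → ℝ)) :=
    F.biUnion (fun ij => B ij.1 ×ˢ B ij.2) with hT
  have hmemT : ∀ e : (Fin d → ℝ) × (Fin d → ℝ),
      e ∈ T ↔ ∃ i j : Fin k, i < j ∧ e.1 ∈ B i ∧ e.2 ∈ B j := by
    intro e
    constructor
    · intro h
      obtain ⟨ij, hijF, hij⟩ := Finset.mem_biUnion.1 h
      rw [Finset.mem_product] at hij
      exact ⟨ij.1, ij.2, (Finset.mem_filter.1 hijF).2, hij.1, hij.2⟩
    · rintro ⟨i, j, hlt, h1, h2⟩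
      exact Finset.mem_biUnion.2 ⟨(i, j), Finset.mem_filter.2 ⟨Finset.mem_univ _, hlt⟩,
        Finset.mem_product.2 ⟨h1, h2⟩⟩
  have hTsubU : ∀ e ∈ T, e.1 ∈ U ∧ e.2 ∈ U := by
    intro e he
    obtain ⟨i, j, _, h1, h2⟩ := (hmemT e).1 he
    exact ⟨hUmem i _ h1, hUmem j _ h2⟩
  have hrev : ∀ e ∈ T, (e.2, e.1) ∉ T := by
    intro e he hc
    obtain ⟨i, j, hlt, h1, h2⟩ := (hmemT e).1 he
    obtain ⟨i', j', hlt', h1', h2'⟩ := (hmemT _).1 hc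
    simp only at h1' h2'
    have hij' : i = j' := by
      by_contra h
      exact hdisj i j' h e.1 h1 h2'
    have hji : j = i' := by
      by_contra h
      exact hdisj j i' h e.2 h2 h1'
    rw [Fin.lt_def] at hlt hlt'
    omega
  have hneq : ∀ e ∈ T, e.1 ≠ e.2 := by
    intro e he h
    obtain ⟨i, j, hlt, h1, h2⟩ := (hmemT e).1 he
    exact hdisj i j (ne_of_lt hlt) e.1 h1 (h ▸ h2)
  have hTne : T.Nonempty := by
    have h01 : (⟨0, hk0⟩ : Fin k) < (⟨1, by omega⟩ : Fin k) := by
      rw [Fin.lt_def]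
      exact Nat.zero_lt_one
    obtain ⟨p, hp⟩ := Finset.card_pos.1
      (show 0 < (B (⟨0, hk0⟩ : Fin k)).card by have := hB2 (⟨0, hk0⟩ : Fin k); omega)
    obtain ⟨q, hq⟩ := Finset.card_pos.1
      (show 0 < (B (⟨1, by omega⟩ : Fin k)).card by have := hB2 (⟨1, by omega⟩ : Fin k); omega)
    exact ⟨(p, q), (hmemT _).2 ⟨_, _, h01, hp, hq⟩⟩
  -- cardinality of T
  have hTcard : T.card = ∑ ij ∈ F, (B ij.1).card * (B ij.2).card := by
    rw [hT, Finset.card_biUnion]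
    · exact Finset.sum_congr rfl fun ij _ => Finset.card_product _ _
    · intro x _ y _ hxy
      refine Finset.disjoint_left.2 fun {e} hex hey => ?_
      rw [Finset.mem_product] at hex hey
      apply hxy
      have hx1 : x.1 = y.1 := by
        by_contra h
        exact hdisj x.1 y.1 h e.1 hex.1 hey.1
      have hx2 : x.2 = y.2 := by
        by_contra h
        exact hdisj x.2 y.2 h e.2 hex.2 hey.2
      exact Prod.ext hx1 hx2
  have hFlow : F.card * (m * m) ≤ T.card := by
    rw [hTcard]
    have := Finset.card_nsmul_le_sum F (fun ij => (B ij.1).card * (B ij.2).card) (m * m)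
      (fun ij _ => Nat.mul_le_mul (hBm _) (hBm _))
    simpa [smul_eq_mul] using this
  have hFcard : 2 * F.card = k * k - k := by
    set F' : Finset (Fin k × Fin k) :=
      Finset.filter (fun ij : Fin k × Fin k => ij.2 < ij.1) Finset.univ with hF'
    have hdisjFF : Disjoint F F' := by
      rw [Finset.disjoint_left]
      intro ij h1 h2
      rw [hF, Finset.mem_filter] at h1
      rw [hF', Finset.mem_filter] at h2
      exact absurd h2.2 (lt_asymm h1.2)
    have hunion : F ∪ F' = (Finset.univ : Finset (Fin k)).offDiag := by
      ext ij
      simp only [Finset.mem_union, hF, hF', Finset.mem_filter, Finset.mem_univ, true_and,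
        Finset.mem_offDiag]
      constructor
      · rintro (h | h)
        · exact ne_of_lt h
        · exact ne_of_gt h
      · intro h
        exact lt_or_gt_of_ne h
    have hbij : F'.card = F.card := by
      apply Finset.card_bij (fun a _ => (a.2, a.1))
      · intro a ha
        rw [hF', Finset.mem_filter] at ha
        rw [hF, Finset.mem_filter]
        exact ⟨Finset.mem_univ _, ha.2⟩
      · intro a _ b _ h
        rw [Prod.mk.injEq] at h
        exact Prod.ext h.2 h.1
      · intro b hb
        rw [hF, Finset.mem_filter] at hb
        refine ⟨(b.2, b.1), ?_, rfl⟩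
        rw [hF', Finset.mem_filter]
        exact ⟨Finset.mem_univ _, hb.2⟩
    have hoff : ((Finset.univ : Finset (Fin k)).offDiag).card = k * k - k := by
      rw [Finset.offDiag_card]
      simp [Finset.card_univ]
    rw [← hoff, ← hunion, Finset.card_union_of_disjoint hdisjFF]
    omega
  have hcardbound : (k * k - k) * (m * m) ≤ 2 * T.card := by
    calc (k * k - k) * (m * m) = 2 * F.card * (m * m) := by rw [hFcard]
      _ = 2 * (F.card * (m * m)) := by ring
      _ ≤ 2 * T.card := by omega
  -- choose functionals and ellipsoid parameters for each pair in T
  have hchoice : ∀ e : (Fin d → ℝ) × (Fin d → ℝ),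
      ∃ (ψ : (Fin d → ℝ) →ₗ[ℝ] ℝ) (ε α : ℝ), 0 < ε ∧ 0 ≤ α ∧ (e ∈ T →
        ψ (e.1 - e.2) = 1 ∧
        (∀ x ∈ U, ∀ y ∈ U, ψ (x - y) ≤ 1 ∧ (ψ (x - y) = 1 → x = e.1 ∧ y = e.2)) ∧
        ε * sqE (e.1 - e.2) + α = 1 ∧
        (∀ x ∈ U, ∀ y ∈ U, ε * sqE (x - y) + α * (ψ (x - y))^2 ≤ 1)) := by
    intro e
    by_cases he : e ∈ T
    swap
    · exact ⟨0, 1, 0, one_pos, le_refl 0, fun h => absurd h he⟩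
    obtain ⟨i, j, hlt, h1, h2⟩ := (hmemT e).1 he
    obtain ⟨ψ₀, hψ₀pos, hψ₀⟩ := key_functional A hAanti B hBsub hB2 U hU (ne_of_lt hlt) h1 h2
    set c0 : ℝ := (ψ₀ (e.1 - e.2))⁻¹ with hc0
    have hc0pos : 0 < c0 := inv_pos.2 hψ₀pos
    set ψ : (Fin d → ℝ) →ₗ[ℝ] ℝ := c0 • ψ₀ with hψdef
    have hψapp : ∀ z, ψ z = c0 * ψ₀ z := fun z => rfl
    have hψ1 : ψ (e.1 - e.2) = 1 := by
      rw [hψapp, hc0]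
      exact inv_mul_cancel₀ (ne_of_gt hψ₀pos)
    have hψle : ∀ x ∈ U, ∀ y ∈ U, ψ (x - y) ≤ 1 ∧ (ψ (x - y) = 1 → x = e.1 ∧ y = e.2) := by
      intro x hx y hy
      have h := hψ₀ x hx y hy
      constructor
      · rw [← hψ1, hψapp, hψapp]
        exact mul_le_mul_of_nonneg_left h.1 hc0pos.le
      · intro heq
        rw [← hψ1, hψapp, hψapp] at heq
        exact h.2 (mul_left_cancel₀ (ne_of_gt hc0pos) heq)
    have habs : ∀ x ∈ U, ∀ y ∈ U, (ψ (x - y))^2 ≤ 1 := by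
      intro x hx y hy
      have ha := (hψle x hx y hy).1
      have hb := (hψle y hy x hx).1
      have hneg : ψ (y - x) = -(ψ (x - y)) := by rw [← neg_sub x y, map_neg]
      rw [hneg] at hb
      nlinarith
    set v : Fin d → ℝ := e.1 - e.2 with hv
    set g : (Fin d → ℝ) × (Fin d → ℝ) → ℝ := fun w =>
      if (ψ (w.1 - w.2))^2 = 1 then 1 else (1 - (ψ (w.1 - w.2))^2) / (sqE (w.1 - w.2) + 1)
      with hg
    set G : Finset ℝ := insert (1 / (sqE v + 1)) ((U ×ˢ U).image g) with hG
    have hGne : G.Nonempty := Finset.insert_nonempty _ _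
    set ε : ℝ := G.min' hGne with hε
    have hεpos : 0 < ε := by
      rw [hε]
      rw [Finset.lt_min'_iff]
      intro y hy
      rw [hG, Finset.mem_insert] at hy
      rcases hy with hy | hy
      · rw [hy]
        have := sqE_nonneg v
        positivity
      · obtain ⟨w, hw, rfl⟩ := Finset.mem_image.1 hy
        rw [Finset.mem_product] at hw
        rw [hg]
        dsimp only
        split
        · exact one_pos
        · rename_i hne
          have h1 := habs w.1 hw.1 w.2 hw.2
          have h2 := sqE_nonneg (w.1 - w.2)
          have h3 : (ψ (w.1 - w.2))^2 < 1 := lt_of_le_of_ne h1 hne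
          apply div_pos <;> linarith
    have hεv : ε * sqE v ≤ 1 := by
      have h1 : ε ≤ 1 / (sqE v + 1) := Finset.min'_le _ _ (Finset.mem_insert_self _ _)
      have h2 := sqE_nonneg v
      have h3 : 0 < sqE v + 1 := by linarith
      have h4 : ε * (sqE v + 1) ≤ 1 := by
        have h5 := mul_le_mul_of_nonneg_right h1 h3.le
        rwa [div_mul_cancel₀ (1:ℝ) (ne_of_gt h3)] at h5
      nlinarith
    set α : ℝ := 1 - ε * sqE v with hα
    have hα0 : 0 ≤ α := by rw [hα]; linarith
    refine ⟨ψ, ε, α, hεpos, hα0, fun _ => ⟨hψ1, hψle, by rw [hα]; ring, ?_⟩⟩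
    intro x hx y hy
    have hw : (x, y) ∈ U ×ˢ U := Finset.mem_product.2 ⟨hx, hy⟩
    have hεg : ε ≤ g (x, y) :=
      Finset.min'_le _ _ (Finset.mem_insert_of_mem (Finset.mem_image_of_mem g hw))
    by_cases ht : (ψ (x - y))^2 = 1
    · rcases mul_self_eq_one_iff.1 (show ψ (x - y) * ψ (x - y) = 1 by rw [← sq]; exact ht) with h | h
      · obtain ⟨hx1, hy1⟩ := (hψle x hx y hy).2 h
        have hxy : x - y = v := by rw [hx1, hy1]
        rw [hxy, hψ1]
        have hone : ε * sqE v + α * 1 ^ 2 = 1 := by rw [hα]; ring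
        linarith
      · have hneg : ψ (y - x) = 1 := by
          rw [← neg_sub x y, map_neg, h]; ring
        obtain ⟨hy1, hx1⟩ := (hψle y hy x hx).2 hneg
        have hxy : x - y = -v := by rw [hx1, hy1, neg_sub]
        rw [hxy, sqE_neg, map_neg, hψ1]
        have hone : ε * sqE v + α * (-1 : ℝ) ^ 2 = 1 := by rw [hα]; ring
        linarith
    · have hg2 : g (x, y) = (1 - (ψ (x - y))^2) / (sqE (x - y) + 1) := by
        rw [hg]; exact if_neg ht
      have hεg' : ε ≤ (1 - (ψ (x - y))^2) / (sqE (x - y) + 1) := hg2 ▸ hεg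
      have hst := sqE_nonneg (x - y)
      have ht1 : (ψ (x - y))^2 ≤ 1 := habs x hx y hy
      have ht0 : 0 ≤ (ψ (x - y))^2 := sq_nonneg _
      have hkey : ε * (sqE (x - y) + 1) ≤ 1 - (ψ (x - y))^2 := by
        have h5 := mul_le_mul_of_nonneg_right hεg' (show (0:ℝ) ≤ sqE (x-y) + 1 by positivity)
        rwa [div_mul_cancel₀ (1 - (ψ (x - y))^2) (show (sqE (x-y) + 1) ≠ 0 by positivity)] at h5
      have hαle : α ≤ 1 := by
        have h6 : 0 ≤ ε * sqE v := mul_nonneg hεpos.le (sqE_nonneg v)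
        rw [hα]; linarith
      have h7 : α * (ψ (x - y))^2 ≤ (ψ (x - y))^2 := mul_le_of_le_one_left ht0 hαle
      linarith
  choose Ψ Ε Al hEpos hAl hProps using hchoice
  set ν : StrictNorm d := mkNorm T hTne Ε Al Ψ hEpos hAl with hν
  have hν_le : ∀ x ∈ U, ∀ y ∈ U, ν.toFun (x - y) ≤ 1 := by
    intro x hx y hy
    rw [hν, mkNorm_toFun]
    apply Finset.sup'_le
    intro e he
    obtain ⟨-, -, -, hle⟩ := hProps e he
    have h2 := nu_sq (hEpos e).le (hAl e) (Ψ e) (x - y)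
    nlinarith [nu_nonneg (Ε e) (Al e) (Ψ e) (x - y), hle x hx y hy]
  have hν_eq : ∀ e ∈ T, ν.toFun (e.1 - e.2) = 1 := by
    intro e he
    obtain ⟨hψ1, -, heq, -⟩ := hProps e he
    have hUe := hTsubU e he
    refine le_antisymm (hν_le _ hUe.1 _ hUe.2) ?_
    have hnu : nu (Ε e) (Al e) (Ψ e) (e.1 - e.2) = 1 := by
      have h2 := nu_sq (hEpos e).le (hAl e) (Ψ e) (e.1 - e.2)
      rw [hψ1] at h2
      nlinarith [nu_nonneg (Ε e) (Al e) (Ψ e) (e.1 - e.2)]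
    rw [hν, mkNorm_toFun]
    calc (1:ℝ) = nu (Ε e) (Al e) (Ψ e) (e.1 - e.2) := hnu.symm
      _ ≤ _ := Finset.le_sup' (fun e' => nu (Ε e') (Al e') (Ψ e') (e.1 - e.2)) he
  have hnonpar : ∀ e ∈ T, ∀ f ∈ T, e ≠ f → ∀ c : ℝ, e.1 - e.2 ≠ c • (f.1 - f.2) := by
    intro e he f hf hef c hc
    obtain ⟨hψe1, hψe, -, -⟩ := hProps e he
    obtain ⟨hψf1, hψf, -, -⟩ := hProps f hf
    have hUe := hTsubU e he
    have hUf := hTsubU f hf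
    have h1 : Ψ e (f.1 - f.2) < 1 := by
      have h := hψe f.1 hUf.1 f.2 hUf.2
      refine lt_of_le_of_ne h.1 (fun heq => ?_)
      obtain ⟨ha, hb⟩ := h.2 heq
      exact hef (Prod.ext ha.symm hb.symm)
    have h2 : Ψ e (f.2 - f.1) < 1 := by
      have h := hψe f.2 hUf.2 f.1 hUf.1
      refine lt_of_le_of_ne h.1 (fun heq => ?_)
      obtain ⟨ha, hb⟩ := h.2 heq
      have : (e.2, e.1) = f := Prod.ext hb.symm ha.symm
      exact hrev e he (this ▸ hf)
    have h3 : Ψ f (e.1 - e.2) < 1 := by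
      have h := hψf e.1 hUe.1 e.2 hUe.2
      refine lt_of_le_of_ne h.1 (fun heq => ?_)
      obtain ⟨ha, hb⟩ := h.2 heq
      exact hef (Prod.ext ha hb)
    have h4 : Ψ f (e.2 - e.1) < 1 := by
      have h := hψf e.2 hUe.2 e.1 hUe.1
      refine lt_of_le_of_ne h.1 (fun heq => ?_)
      obtain ⟨ha, hb⟩ := h.2 heq
      have : (f.2, f.1) = e := Prod.ext hb.symm ha.symm
      exact hrev f hf (this ▸ he)
    have hnege : Ψ e (f.2 - f.1) = -(Ψ e (f.1 - f.2)) := by rw [← neg_sub f.1 f.2, map_neg]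
    have hnegf : Ψ f (e.2 - e.1) = -(Ψ f (e.1 - e.2)) := by rw [← neg_sub e.1 e.2, map_neg]
    have hca : c * Ψ e (f.1 - f.2) = 1 := by
      rw [← hψe1, hc, map_smul, smul_eq_mul]
    have hcf : Ψ f (e.1 - e.2) = c := by
      rw [hc, map_smul, smul_eq_mul, hψf1, mul_one]
    rw [hnege] at h2
    rw [hnegf, hcf] at h4
    rw [hcf] at h3
    set a : ℝ := Ψ e (f.1 - f.2)
    nlinarith [mul_pos (by linarith : (0:ℝ) < 1 - c) (by linarith : (0:ℝ) < 1 + a),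
      mul_pos (by linarith : (0:ℝ) < 1 + c) (by linarith : (0:ℝ) < 1 - a)]
  exact ⟨U, ν, T, hUcard,
    fun e he => ⟨(hTsubU e he).1, (hTsubU e he).2, hneq e he, hν_eq e he, hrev e he⟩,
    hnonpar, fun p hp q hq => hν_le p hp q hq, hTne, hcardbound⟩



lemma le_liminf_aux (f h : ℕ → ℝ) (c : ℝ) (hh : Filter.Tendsto h Filter.atTop (nhds c))
    (hfh : ∀ᶠ n in Filter.atTop, h n ≤ f n)
    (hf1 : ∀ᶠ n in Filter.atTop, f n ≤ 1) : c ≤ Filter.atTop.liminf f := by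
  have h2 : Filter.IsBoundedUnder (· ≤ ·) Filter.atTop f := ⟨1, Filter.eventually_map.2 hf1⟩
  have := Filter.liminf_le_liminf hfh (hh.isBoundedUnder_ge) (h2.isCoboundedUnder_ge)
  rwa [hh.liminf_eq] at this

lemma exists_finset_card {d : ℕ} (hd : 0 < d) (n : ℕ) :
    ∃ S : Finset (Fin d → ℝ), S.card = n := by
  have emb : ℕ ↪ (Fin d → ℝ) :=
    ⟨fun j => (fun _ => (j : ℝ)), fun a b h => Nat.cast_injective (congrFun h ⟨0, hd⟩)⟩
  exact ⟨(Finset.range n).map emb, by simp⟩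

lemma Wfun_le (d n : ℕ) : Wfun d n ≤ n * n := by
  unfold Wfun
  apply csSup_le'
  rintro x ⟨S, ν, T, hS, hT1, -, rfl⟩
  calc T.card ≤ (S ×ˢ S).card := Finset.card_le_card fun e he =>
        Finset.mem_product.2 ⟨(hT1 e he).1, (hT1 e he).2.1⟩
    _ = n * n := by rw [Finset.card_product, hS]

lemma Dfun_le (d n : ℕ) : Dfun d n ≤ n * n := by
  unfold Dfun
  apply csSup_le'
  rintro x ⟨S, ν, T, D, hS, -, -, hT1, rfl⟩
  calc T.card ≤ (S ×ˢ S).card := Finset.card_le_card fun e he =>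
        Finset.mem_product.2 ⟨(hT1 e he).1, (hT1 e he).2.1⟩
    _ = n * n := by rw [Finset.card_product, hS]

lemma step_lemma {d k n : ℕ} (hk : 2 ≤ k) (hn : 2 * k ≤ n)
    (hfam : ∀ m : ℕ, ∃ A : Fin k → Finset (Fin d → ℝ),
      (∀ i, m ≤ (A i).card) ∧ StrictlyAntipodal (fun i => ((A i : Set (Fin d → ℝ))))) :
    (k * k - k) * ((n / k) * (n / k)) ≤ 2 * Wfun d n ∧
    (k * k - k) * ((n / k) * (n / k)) ≤ 2 * Dfun d n := by
  obtain ⟨A, hA1, hA2⟩ := hfam n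
  obtain ⟨S, ν, T, hS, hTmem, hTnp, hdiam, hTne, hTcard⟩ := construction hk hn A hA1 hA2
  have hWb : BddAbove {k | ∃ (S : Finset (Fin d → ℝ)) (ν : StrictNorm d)
      (T : Finset ((Fin d → ℝ) × (Fin d → ℝ))),
      S.card = n ∧
      (∀ e ∈ T, e.1 ∈ S ∧ e.2 ∈ S ∧ ν.toFun (e.1 - e.2) = 1) ∧
      (∀ e ∈ T, ∀ f ∈ T, e ≠ f → ∀ c : ℝ, e.1 - e.2 ≠ c • (f.1 - f.2)) ∧
      T.card = k} := by
    refine ⟨n * n, ?_⟩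
    rintro x ⟨S', ν', T', hS', hT1, -, rfl⟩
    calc T'.card ≤ (S' ×ˢ S').card := Finset.card_le_card fun e he =>
          Finset.mem_product.2 ⟨(hT1 e he).1, (hT1 e he).2.1⟩
      _ = n * n := by rw [Finset.card_product, hS']
  have hDb : BddAbove {k | ∃ (S : Finset (Fin d → ℝ)) (ν : StrictNorm d)
      (T : Finset ((Fin d → ℝ) × (Fin d → ℝ))) (D : ℝ),
      S.card = n ∧
      (∀ p ∈ S, ∀ q ∈ S, ν.toFun (p - q) ≤ D) ∧
      (∃ p ∈ S, ∃ q ∈ S, ν.toFun (p - q) = D) ∧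
      (∀ e ∈ T, e.1 ∈ S ∧ e.2 ∈ S ∧ e.1 ≠ e.2 ∧ ν.toFun (e.1 - e.2) = D ∧ (e.2, e.1) ∉ T) ∧
      T.card = k} := by
    refine ⟨n * n, ?_⟩
    rintro x ⟨S', ν', T', D', hS', -, -, hT1, rfl⟩
    calc T'.card ≤ (S' ×ˢ S').card := Finset.card_le_card fun e he =>
          Finset.mem_product.2 ⟨(hT1 e he).1, (hT1 e he).2.1⟩
      _ = n * n := by rw [Finset.card_product, hS']
  have hWmem : T.card ≤ Wfun d n := by
    apply le_csSup hWb
    exact ⟨S, ν, T, hS, fun e he => ⟨(hTmem e he).1, (hTmem e he).2.1, (hTmem e he).2.2.2.1⟩,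
      hTnp, rfl⟩
  have hDmem : T.card ≤ Dfun d n := by
    apply le_csSup hDb
    obtain ⟨e₀, he₀⟩ := hTne
    exact ⟨S, ν, T, 1, hS, hdiam,
      ⟨e₀.1, (hTmem e₀ he₀).1, e₀.2, (hTmem e₀ he₀).2.1, (hTmem e₀ he₀).2.2.2.1⟩,
      hTmem, rfl⟩
  omega

lemma liminf_part {k : ℕ} (hk : 2 ≤ k) (W : ℕ → ℕ)
    (hstep : ∀ n, 2 * k ≤ n → (k * k - k) * ((n / k) * (n / k)) ≤ 2 * W n)
    (hub : ∀ n, W n ≤ n * n) :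
    (1 / 2 : ℝ) * (1 - 1 / (k : ℝ)) ≤
      Filter.atTop.liminf (fun n : ℕ => (W n : ℝ) / (n : ℝ) ^ 2) := by
  have hk0 : (0 : ℝ) < k := by
    have : (2:ℝ) ≤ k := by exact_mod_cast hk
    linarith
  have hk2 : (2 : ℝ) ≤ (k : ℝ) := by exact_mod_cast hk
  have hkk : (0 : ℝ) ≤ (k : ℝ) * k - k := by nlinarith
  have hval : ((k : ℝ) * k - k) / (2 * (k : ℝ) ^ 2) * (1 - 0) ^ 2
      = (1 / 2 : ℝ) * (1 - 1 / (k : ℝ)) := by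
    field_simp
    ring
  have hlim : Filter.Tendsto (fun n : ℕ => ((k : ℝ) * k - k) / (2 * (k : ℝ) ^ 2)
      * (1 - (k : ℝ) / n) ^ 2) Filter.atTop
      (nhds (((k : ℝ) * k - k) / (2 * (k : ℝ) ^ 2) * (1 - 0) ^ 2)) := by
    apply Filter.Tendsto.mul tendsto_const_nhds
    apply Filter.Tendsto.pow
    exact Filter.Tendsto.sub tendsto_const_nhds (tendsto_const_div_atTop_nhds_zero_nat (k : ℝ))
  rw [← hval]
  apply le_liminf_aux _ _ _ hlim
  · rw [Filter.eventually_atTop]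
    refine ⟨2 * k, fun n hn => ?_⟩
    have hn1 : 1 ≤ n := by omega
    have hn0 : (0 : ℝ) < n := by exact_mod_cast hn1
    have hnk : (k : ℝ) ≤ (n : ℝ) := by
      have : k ≤ n := by omega
      exact_mod_cast this
    set q : ℕ := n / k with hq
    have hsubk : k ≤ k * k := Nat.le_mul_of_pos_left k (by omega)
    have h2 : ((k : ℝ) * k - k) * (q : ℝ) ^ 2 ≤ 2 * (W n : ℝ) := by
      have h1 := hstep n hn
      have h1' : ((((k * k - k) * (q * q)) : ℕ) : ℝ) ≤ (((2 * W n : ℕ)) : ℝ) := by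
        exact_mod_cast h1
      push_cast [Nat.cast_sub hsubk] at h1'
      nlinarith [h1']
    have h5 : k * q + n % k = n := Nat.div_add_mod n k
    have h6 : n % k < k := Nat.mod_lt n (by omega)
    have h7 : n < k * q + k := by
      calc n = k * q + n % k := h5.symm
        _ < k * q + k := Nat.add_lt_add_left h6 _
    have h7' : (n : ℝ) < (k : ℝ) * q + k := by exact_mod_cast h7
    have hq1 : ((n : ℝ) - k) / k ≤ (q : ℝ) := by
      rw [div_le_iff₀ hk0]
      nlinarith
    have hq0 : (0 : ℝ) ≤ ((n : ℝ) - k) / k := by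
      apply div_nonneg _ hk0.le
      linarith
    have hsq : (((n : ℝ) - k) / k) ^ 2 ≤ (q : ℝ) ^ 2 := pow_le_pow_left₀ hq0 hq1 2
    rw [le_div_iff₀ (by positivity : (0 : ℝ) < (n : ℝ) ^ 2)]
    have hL : ((k : ℝ) * k - k) / (2 * (k : ℝ) ^ 2) * (1 - (k : ℝ) / n) ^ 2 * (n : ℝ) ^ 2
        = (((k : ℝ) * k - k) * ((((n : ℝ) - k) / k)) ^ 2) / 2 := by
      field_simp
    rw [hL]
    have := mul_le_mul_of_nonneg_left hsq hkk
    linarith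
  · rw [Filter.eventually_atTop]
    refine ⟨1, fun n hn => ?_⟩
    have hn0 : (0 : ℝ) < n := by exact_mod_cast hn
    rw [div_le_one (by positivity)]
    have : (W n : ℝ) ≤ (n : ℝ) * n := by exact_mod_cast hub n
    nlinarith

lemma one_mem_aset {d : ℕ} (hd : 0 < d) :
    ∀ m : ℕ, ∃ A : Fin 1 → Finset (Fin d → ℝ),
      (∀ i, m ≤ (A i).card) ∧ StrictlyAntipodal (fun i => ((A i : Set (Fin d → ℝ)))) := by
  intro m
  obtain ⟨S, hS⟩ := exists_finset_card hd m
  refine ⟨fun _ => S, fun _ => hS.ge, ?_⟩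
  intro i j hij
  exact absurd (Subsingleton.elim i j) hij

end AuxWD

/-- For every `d ≥ 3`, `liminf W_d(n)/n² ≥ ½(1 − 1/a(d))` and
`liminf D_d(n)/n² ≥ ½(1 − 1/a(d))`. -/
theorem liminf_W_D_lower (d : ℕ) (hd : 3 ≤ d) :
    (1 / 2 : ℝ) * (1 - 1 / (aconst d : ℝ)) ≤
        atTop.liminf (fun n : ℕ => (Wfun d n : ℝ) / (n : ℝ) ^ 2) ∧
    (1 / 2 : ℝ) * (1 - 1 / (aconst d : ℝ)) ≤
        atTop.liminf (fun n : ℕ => (Dfun d n : ℝ) / (n : ℝ) ^ 2) := by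
  have hd0 : 0 < d := by omega
  have haux : ∀ W : ℕ → ℕ, (∀ n, W n ≤ n * n) →
      (0 : ℝ) ≤ atTop.liminf (fun n : ℕ => (W n : ℝ) / (n : ℝ) ^ 2) := by
    intro W hub
    apply AuxWD.le_liminf_aux _ (fun _ => (0 : ℝ)) _ tendsto_const_nhds
    · exact Filter.Eventually.of_forall fun n => by positivity
    · rw [Filter.eventually_atTop]
      refine ⟨1, fun n hn => ?_⟩
      have hn0 : (0 : ℝ) < n := by exact_mod_cast hn
      rw [div_le_one (by positivity)]
      have : (W n : ℝ) ≤ (n : ℝ) * n := by exact_mod_cast hub n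
      nlinarith
  have hparts : ∀ k, 2 ≤ k →
      (∀ m : ℕ, ∃ A : Fin k → Finset (Fin d → ℝ),
        (∀ i, m ≤ (A i).card) ∧ StrictlyAntipodal (fun i => ((A i : Set (Fin d → ℝ))))) →
      (1 / 2 : ℝ) * (1 - 1 / (k : ℝ)) ≤
          atTop.liminf (fun n : ℕ => (Wfun d n : ℝ) / (n : ℝ) ^ 2) ∧
      (1 / 2 : ℝ) * (1 - 1 / (k : ℝ)) ≤
          atTop.liminf (fun n : ℕ => (Dfun d n : ℝ) / (n : ℝ) ^ 2) := by
    intro k hk hfam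
    constructor
    · exact AuxWD.liminf_part hk (Wfun d)
        (fun n hn => (AuxWD.step_lemma hk hn hfam).1) (AuxWD.Wfun_le d)
    · exact AuxWD.liminf_part hk (Dfun d)
        (fun n hn => (AuxWD.step_lemma hk hn hfam).2) (AuxWD.Dfun_le d)
  have main : ∀ L : ℝ, 0 ≤ L →
      (∀ k, 2 ≤ k →
        (∀ m : ℕ, ∃ A : Fin k → Finset (Fin d → ℝ),
          (∀ i, m ≤ (A i).card) ∧ StrictlyAntipodal (fun i => ((A i : Set (Fin d → ℝ))))) →
        (1 / 2 : ℝ) * (1 - 1 / (k : ℝ)) ≤ L) →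
      (1 / 2 : ℝ) * (1 - 1 / (aconst d : ℝ)) ≤ L := by
    intro L hL0 hLk
    by_cases hb : BddAbove {k | ∀ m : ℕ, ∃ A : Fin k → Finset (Fin d → ℝ),
        (∀ i, m ≤ (A i).card) ∧ StrictlyAntipodal (fun i => ((A i : Set (Fin d → ℝ))))}
    · have h1mem : 1 ∈ {k | ∀ m : ℕ, ∃ A : Fin k → Finset (Fin d → ℝ),
          (∀ i, m ≤ (A i).card) ∧ StrictlyAntipodal (fun i => ((A i : Set (Fin d → ℝ))))} :=
        AuxWD.one_mem_aset hd0
      have hmem : aconst d ∈ {k | ∀ m : ℕ, ∃ A : Fin k → Finset (Fin d → ℝ),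
          (∀ i, m ≤ (A i).card) ∧ StrictlyAntipodal (fun i => ((A i : Set (Fin d → ℝ))))} :=
        Nat.sSup_mem ⟨1, h1mem⟩ hb
      have h1le : 1 ≤ aconst d := le_csSup hb h1mem
      by_cases ha2 : 2 ≤ aconst d
      · exact hLk (aconst d) ha2 hmem
      · have ha1 : aconst d = 1 := by omega
        rw [ha1]
        norm_num
        exact hL0
    · have hhalf : ∀ ε : ℝ, 0 < ε → 1 / 2 ≤ L + ε := by
        intro ε hε
        obtain ⟨k, hkmem, hklt⟩ := not_bddAbove_iff.1 hb (max 2 ⌈ε⁻¹⌉₊)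
        have hk2 : 2 ≤ k := le_trans (le_max_left _ _) hklt.le
        have hki : (ε⁻¹ : ℝ) ≤ k := by
          calc (ε⁻¹ : ℝ) ≤ (⌈ε⁻¹⌉₊ : ℝ) := Nat.le_ceil _
            _ ≤ k := by exact_mod_cast le_trans (le_max_right _ _) hklt.le
        have hkpos : (0 : ℝ) < k := by
          have : (2 : ℝ) ≤ k := by exact_mod_cast hk2
          linarith
        have h1k : 1 / (k : ℝ) ≤ ε := by
          rw [div_le_iff₀ hkpos]
          have h := mul_le_mul_of_nonneg_left hki hε.le
          rwa [mul_inv_cancel₀ (ne_of_gt hε)] at h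
        have ht0 : (0 : ℝ) ≤ 1 / (k : ℝ) := by positivity
        have hLge := hLk k hk2 hkmem
        linarith
      have hhalf' : (1 / 2 : ℝ) ≤ L := le_of_forall_pos_le_add hhalf
      have hnn : (0 : ℝ) ≤ 1 / (aconst d : ℝ) := by positivity
      linarith
  constructor
  · exact main _ (haux (Wfun d) (AuxWD.Wfun_le d))
      (fun k hk hfam => (hparts k hk hfam).1)
  · exact main _ (haux (Dfun d) (AuxWD.Dfun_le d))
      (fun k hk hfam => (hparts k hk hfam).2)
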